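/- Proposition 7. Let N ≥ 2 and let μ be an integer with 1 ≤ μ ≤ N−1. Set b̄(z) = q(1−z)/(q²−z) and c̄(z) = (q²−1)/(q²−z). For μ = 1 define A₁ = (q w₁' − w₀), B₁ = −b̄(w₀'/w₀)(w₁' − q w₀), C₁ = −c̄(w₀'/w₀)(q w₁' − w₀'); for 2 ≤ μ ≤ N−1 define A_μ = Π_{j=0}^{μ−2} (w_{j+1} − q w_j')(q w_{j+1}' − w_j) · (q w_μ' − w_{μ−1}), B_μ = −b̄(w₀'/w₀)(w₁ − q w₀)(q w₁' − w₀') · Π_{j=1}^{μ−2} (w_{j+1} − q w_j')(q w_{j+1}' − w_j) · (w_μ' − q w_{μ−1}'), and C_μ = −c̄(w₀'/w₀)(w₁ − q w₀)(q w₁' − w₀') · Π_{j=1}^{μ−2} (w_{j+1} − q w_j')(q w_{j+1}' − w_j) · (q w_μ' − w_{μ−1}). Then A_μ + B_μ + C_μ ∼ 0 with respect to the pairs (w₁, w₁'), …, (w_{μ−1}, w_{μ−1}'), all carrying the fermionic exchange factor H^f (the ŝl(0|N) setting); here w₀, w₀' and w_μ' are further free variables, and for μ = 1 the weak equality is the plain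 identity A₁ + B₁ + C₁ = 0. -/

import Mathlib

/-- Bosonic exchange factor `H^b(u,v) = -(q²v - u)/(q²u - v)`. -/
noncomputable def Hb (q u v : ℂ) : ℂ := -(q ^ 2 * v - u) / (q ^ 2 * u - v)

/-- Fermionic exchange factor `H^f(u,v) = -(q²u - v)/(q²v - u)`. -/
noncomputable def Hf (q u v : ℂ) : ℂ := -(q ^ 2 * u - v) / (q ^ 2 * v - u)

/-- Exchange factor assignment for `U_q(sl^(M|N))`: bosonic for `j < M`,
the constant `-1` for `j = M`, fermionic for `j > M`. -/
noncomputable def Hex (M : ℕ) (q : ℂ) (j : ℕ) : ℂ → ℂ → ℂ :=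
  if j < M then Hb q else if j = M then fun _ _ => -1 else Hf q

/-- Interchange `w_j` and `w_j'` for every `j ∈ σ`. -/
def swapOn (σ : Finset ℕ) (w w' : ℕ → ℂ) : ℕ → ℂ := fun j => if j ∈ σ then w' j else w j

/-- Weak equality `F ∼ G` with respect to the pairs `(w_j, w_j')`, `j ∈ J`,
carrying exchange factors `H j`. -/
def WeakEq (J : Finset ℕ) (H : ℕ → ℂ → ℂ → ℂ) (w w' : ℕ → ℂ)
    (F G : (ℕ → ℂ) → (ℕ → ℂ) → ℂ) : Prop :=
  ∑ σ ∈ J.powerset, (∏ j ∈ σ, H j (w' j) (w j)) * F (swapOn σ w w') (swapOn σ w' w)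
    = ∑ σ ∈ J.powerset, (∏ j ∈ σ, H j (w' j) (w j)) * G (swapOn σ w w') (swapOn σ w' w)

/-- `b̄(z) = q(1−z)/(q²−z)`. -/
noncomputable def bbar (q z : ℂ) : ℂ := q * (1 - z) / (q ^ 2 - z)

/-- `c̄(z) = (q²−1)/(q²−z)`. -/
noncomputable def cbar (q z : ℂ) : ℂ := (q ^ 2 - 1) / (q ^ 2 - z)

namespace Prop7
noncomputable def Phi (q : ℂ) (w w' : ℕ → ℂ) (J : Finset ℕ) (F : (ℕ → ℂ) → (ℕ → ℂ) → ℂ) : ℂ :=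
  ∑ σ ∈ J.powerset, ((∏ j ∈ σ, -(q ^ 2 * w' j - w j)) * ∏ j ∈ J \ σ, (q ^ 2 * w j - w' j)) *
    F (swapOn σ w w') (swapOn σ w' w)

lemma swapOn_empty (w w' : ℕ → ℂ) : swapOn ∅ w w' = w := by
  funext j; simp [swapOn]

lemma swapOn_notMem {σ : Finset ℕ} {j : ℕ} (h : j ∉ σ) (w w' : ℕ → ℂ) :
    swapOn σ w w' j = w j := by simp [swapOn, h]

lemma swapOn_insert {σ : Finset ℕ} {k : ℕ} (h : k ∉ σ) (w w' : ℕ → ℂ) :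
    swapOn (insert k σ) w w' = swapOn {k} (swapOn σ w w') (swapOn σ w' w) := by
  funext j
  by_cases hjk : j = k
  · subst hjk; simp [swapOn, h]
  · by_cases hjs : j ∈ σ <;> simp [swapOn, hjk, hjs]

lemma Phi_empty (q : ℂ) (w w' : ℕ → ℂ) (F : (ℕ → ℂ) → (ℕ → ℂ) → ℂ) :
    Phi q w w' ∅ F = F w w' := by
  simp [Phi, swapOn_empty]

lemma Phi_congr (q : ℂ) (w w' : ℕ → ℂ) (J : Finset ℕ) (F G : (ℕ → ℂ) → (ℕ → ℂ) → ℂ)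
    (h : ∀ σ ∈ J.powerset, F (swapOn σ w w') (swapOn σ w' w) = G (swapOn σ w w') (swapOn σ w' w)) :
    Phi q w w' J F = Phi q w w' J G := by
  unfold Phi
  exact Finset.sum_congr rfl fun σ hσ => by rw [h σ hσ]

lemma Phi_insert (q : ℂ) (w w' : ℕ → ℂ) {J : Finset ℕ} {k : ℕ} (hk : k ∉ J)
    (F : (ℕ → ℂ) → (ℕ → ℂ) → ℂ) :
    Phi q w w' (insert k J) F = Phi q w w' J (fun u u' =>
      (q ^ 2 * w k - w' k) * F u u' -
      (q ^ 2 * w' k - w k) * F (swapOn {k} u u') (swapOn {k} u' u)) := by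
  unfold Phi
  rw [Finset.powerset_insert, Finset.sum_union]
  · rw [Finset.sum_image (fun σ hσ τ hτ hst => by
      have hσ' : k ∉ σ := fun hc => hk (Finset.mem_powerset.1 hσ hc)
      have hτ' : k ∉ τ := fun hc => hk (Finset.mem_powerset.1 hτ hc)
      rw [← Finset.erase_insert hσ', ← Finset.erase_insert hτ', hst])]
    rw [← Finset.sum_add_distrib]
    refine Finset.sum_congr rfl fun σ hσ => ?_
    have hσJ : σ ⊆ J := Finset.mem_powerset.1 hσ
    have hkσ : k ∉ σ := fun hc => hk (hσJ hc)
    have h1 : (insert k J) \ σ = insert k (J \ σ) := Finset.insert_sdiff_of_notMem _ hkσ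
    have h2 : (insert k J) \ (insert k σ) = J \ σ := by
      ext j
      simp only [Finset.mem_sdiff, Finset.mem_insert]
      constructor
      · rintro ⟨hj1, hj2⟩
        rcases hj1 with rfl | hj1
        · exact absurd (Or.inl rfl) hj2
        · exact ⟨hj1, fun hc => hj2 (Or.inr hc)⟩
      · rintro ⟨hj1, hj2⟩
        exact ⟨Or.inr hj1, fun hc => by
          rcases hc with rfl | hc
          · exact hk hj1
          · exact hj2 hc⟩
    dsimp only
    rw [h1, h2, Finset.prod_insert (fun hc => hk (Finset.mem_sdiff.1 hc).1),
        Finset.prod_insert hkσ, swapOn_insert hkσ, swapOn_insert hkσ]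
    ring
  · rw [Finset.disjoint_right]
    intro σ hσ1 hσ2
    obtain ⟨τ, hτ, rfl⟩ := Finset.mem_image.1 hσ1
    exact hk (Finset.mem_powerset.1 hσ2 (Finset.mem_insert_self k τ))

noncomputable def chainF (q : ℂ) (u u' : ℕ → ℂ) (j : ℕ) : ℂ :=
  (u (j + 1) - q * u' j) * (q * u' (j + 1) - u j)

noncomputable def Xf (q : ℂ) (ν : ℕ) (u u' : ℕ → ℂ) : ℂ :=
  (q ^ 2 * u 0 - u' 0) * ∏ j ∈ Finset.range ν, chainF q u u' j -
    (q ^ 2 - 1) * u 0 * ((u 1 - q * u 0) * (q * u' 1 - u' 0)) *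
      ∏ j ∈ Finset.Ico 1 ν, chainF q u u' j

noncomputable def Yf (q : ℂ) (ν : ℕ) (u u' : ℕ → ℂ) : ℂ :=
  -(q * (u 0 - u' 0)) * ((u 1 - q * u 0) * (q * u' 1 - u' 0)) *
    ∏ j ∈ Finset.Ico 1 ν, chainF q u u' j

noncomputable def famA (q x y r m s t : ℂ) : ℂ :=
  (q ^ 2 * x - y) * (q * r - m * x) * ((q * y - s) * (x - q * t)) -
    (q ^ 2 * y - x) * (q * r - m * y) * ((q * x - s) * (y - q * t))

noncomputable def famB (q x y r m s t : ℂ) : ℂ :=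
  (q ^ 2 * x - y) * (r - q * m * y) * ((q * y - s) * (x - q * t)) -
    (q ^ 2 * y - x) * (r - q * m * x) * ((q * x - s) * (y - q * t))

lemma Xf_congr (q : ℂ) (ν : ℕ) (hν : 1 ≤ ν) (u u' v v' : ℕ → ℂ)
    (h : ∀ j ≤ ν, u j = v j) (h' : ∀ j ≤ ν, u' j = v' j) :
    Xf q ν u u' = Xf q ν v v' := by
  unfold Xf
  rw [h 0 (by omega), h 1 hν, h' 0 (by omega), h' 1 hν,
    Finset.prod_congr rfl (fun j hj => show chainF q u u' j = chainF q v v' j by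
      have hj' : j < ν := Finset.mem_range.1 hj
      unfold chainF
      rw [h (j+1) (by omega), h j (by omega), h' (j+1) (by omega), h' j (by omega)]),
    Finset.prod_congr rfl (fun j hj => show chainF q u u' j = chainF q v v' j by
      have hj' : j < ν := (Finset.mem_Ico.1 hj).2
      unfold chainF
      rw [h (j+1) (by omega), h j (by omega), h' (j+1) (by omega), h' j (by omega)])]

lemma Yf_congr (q : ℂ) (ν : ℕ) (hν : 1 ≤ ν) (u u' v v' : ℕ → ℂ)
    (h : ∀ j ≤ ν, u j = v j) (h' : ∀ j ≤ ν, u' j = v' j) :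
    Yf q ν u u' = Yf q ν v v' := by
  unfold Yf
  rw [h 0 (by omega), h 1 hν, h' 0 (by omega), h' 1 hν,
    Finset.prod_congr rfl (fun j hj => show chainF q u u' j = chainF q v v' j by
      have hj' : j < ν := (Finset.mem_Ico.1 hj).2
      unfold chainF
      rw [h (j+1) (by omega), h j (by omega), h' (j+1) (by omega), h' j (by omega)])]

lemma Xf_step (q : ℂ) (ν : ℕ) (hν : 1 ≤ ν) (u u' : ℕ → ℂ) :
    Xf q (ν + 1) u u' = Xf q ν u u' * chainF q u u' ν := by
  unfold Xf
  rw [Finset.prod_range_succ, Finset.prod_Ico_succ_top hν]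
  ring

lemma Yf_step (q : ℂ) (ν : ℕ) (hν : 1 ≤ ν) (u u' : ℕ → ℂ) :
    Yf q (ν + 1) u u' = Yf q ν u u' * chainF q u u' ν := by
  unfold Yf
  rw [Finset.prod_Ico_succ_top hν]
  ring

lemma stepA (q x y r m X Y s t : ℂ) :
    (q ^ 2 * X - Y) * ((X - q * t) * (q * Y - s)) * famA q x y r m X Y -
      (q ^ 2 * Y - X) * ((Y - q * t) * (q * X - s)) * famA q x y r m Y X =
    famA q X Y (famB q x y r m X Y + q * (m * (q ^ 2 * x - y) * (q ^ 2 * y - x) * (x - y)) * Y)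
      (m * (q ^ 2 * x - y) * (q ^ 2 * y - x) * (x - y)) s t := by
  unfold famA famB; ring

lemma stepB (q x y r m X Y s t : ℂ) :
    (q ^ 2 * X - Y) * ((X - q * t) * (q * Y - s)) * famB q x y r m X Y -
      (q ^ 2 * Y - X) * ((Y - q * t) * (q * X - s)) * famB q x y r m Y X =
    famB q X Y (famB q x y r m X Y + q * (m * (q ^ 2 * x - y) * (q ^ 2 * y - x) * (x - y)) * Y)
      (m * (q ^ 2 * x - y) * (q ^ 2 * y - x) * (x - y)) s t := by
  unfold famB; ring

lemma stepA_lin (q T X Y s t : ℂ) :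
    (q ^ 2 * X - Y) * ((X - q * t) * (q * Y - s)) * (q * T - X) -
      (q ^ 2 * Y - X) * ((Y - q * t) * (q * X - s)) * (q * T - Y) =
    famA q X Y T 1 s t := by
  unfold famA; ring

lemma stepB_lin (q T X Y s t : ℂ) :
    (q ^ 2 * X - Y) * ((X - q * t) * (q * Y - s)) * (T - q * Y) -
      (q ^ 2 * Y - X) * ((Y - q * t) * (q * X - s)) * (T - q * X) =
    famB q X Y T 1 s t := by
  unfold famB; ring

lemma baseId (q w0 p0 w1 p1 x y r m : ℂ) :
    (q ^ 2 * w1 - p1) *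
      (((q ^ 2 * w0 - p0) * ((w1 - q * p0) * (q * p1 - w0)) -
          (q ^ 2 - 1) * w0 * ((w1 - q * w0) * (q * p1 - p0))) * famA q x y r m w1 p1 +
        -(q * (w0 - p0)) * ((w1 - q * w0) * (q * p1 - p0)) * famB q x y r m w1 p1) -
    (q ^ 2 * p1 - w1) *
      (((q ^ 2 * w0 - p0) * ((p1 - q * p0) * (q * w1 - w0)) -
          (q ^ 2 - 1) * w0 * ((p1 - q * w0) * (q * w1 - p0))) * famA q x y r m p1 w1 +
        -(q * (w0 - p0)) * ((p1 - q * w0) * (q * w1 - p0)) * famB q x y r m p1 w1) = 0 := by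
  unfold famA famB; ring

lemma baseId_lin (q w0 p0 w1 p1 T : ℂ) :
    (q ^ 2 * w1 - p1) *
      (((q ^ 2 * w0 - p0) * ((w1 - q * p0) * (q * p1 - w0)) -
          (q ^ 2 - 1) * w0 * ((w1 - q * w0) * (q * p1 - p0))) * (q * T - w1) +
        -(q * (w0 - p0)) * ((w1 - q * w0) * (q * p1 - p0)) * (T - q * p1)) -
    (q ^ 2 * p1 - w1) *
      (((q ^ 2 * w0 - p0) * ((p1 - q * p0) * (q * w1 - w0)) -
          (q ^ 2 - 1) * w0 * ((p1 - q * w0) * (q * w1 - p0))) * (q * T - p1) +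
        -(q * (w0 - p0)) * ((p1 - q * w0) * (q * w1 - p0)) * (T - q * w1)) = 0 := by
  ring

lemma mainLemma (q : ℂ) (w w' : ℕ → ℂ) :
    ∀ ν, 1 ≤ ν → ∀ x y r m : ℂ,
      Phi q w w' (Finset.Ico 1 (ν + 1)) (fun u u' =>
        Xf q ν u u' * famA q x y r m (u ν) (u' ν) +
        Yf q ν u u' * famB q x y r m (u ν) (u' ν)) = 0 := by
  intro ν
  induction ν with
  | zero => intro h; exact absurd h (by omega)
  | succ n ih =>
    intro _ x y r m
    rcases Nat.eq_zero_or_pos n with hn | hn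
    · subst hn
      have h1 : Finset.Ico 1 2 = insert 1 (∅ : Finset ℕ) := rfl
      rw [h1, Phi_insert q w w' (Finset.notMem_empty 1), Phi_empty]
      have s1 : swapOn {1} w w' 1 = w' 1 := by simp [swapOn]
      have s2 : swapOn {1} w' w 1 = w 1 := by simp [swapOn]
      have s3 : swapOn {1} w w' 0 = w 0 := by simp [swapOn]
      have s4 : swapOn {1} w' w 0 = w' 0 := by simp [swapOn]
      have s5 : swapOn {1} w w' 2 = w 2 := by simp [swapOn]
      have s6 : swapOn {1} w' w 2 = w' 2 := by simp [swapOn]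
      simp only [zero_add, Xf, Yf, chainF, Finset.prod_range_one, Finset.Ico_self,
        Finset.prod_empty, s1, s2, s3, s4, s5, s6]
      linear_combination baseId q (w 0) (w' 0) (w 1) (w' 1) x y r m
    · have hmem : n + 1 ∉ Finset.Ico 1 (n + 1) := by simp
      have hIco : Finset.Ico 1 (n + 1 + 1) = insert (n + 1) (Finset.Ico 1 (n + 1)) := by
        rw [Nat.Ico_succ_right_eq_insert_Ico (by omega)]
      rw [hIco, Phi_insert q w w' hmem]
      rw [Phi_congr q w w' _ _ (fun u u' =>
        Xf q n u u' * famA q (w (n+1)) (w' (n+1))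
            (famB q x y r m (w (n+1)) (w' (n+1)) +
              q * (m * (q ^ 2 * x - y) * (q ^ 2 * y - x) * (x - y)) * (w' (n+1)))
            (m * (q ^ 2 * x - y) * (q ^ 2 * y - x) * (x - y)) (u n) (u' n) +
        Yf q n u u' * famB q (w (n+1)) (w' (n+1))
            (famB q x y r m (w (n+1)) (w' (n+1)) +
              q * (m * (q ^ 2 * x - y) * (q ^ 2 * y - x) * (x - y)) * (w' (n+1)))
            (m * (q ^ 2 * x - y) * (q ^ 2 * y - x) * (x - y)) (u n) (u' n)) ?_]
      · exact ih hn _ _ _ _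
      · intro σ hσ
        have hσs : σ ⊆ Finset.Ico 1 (n + 1) := Finset.mem_powerset.1 hσ
        have hnσ : (n + 1) ∉ σ := fun hc => by
          have := Finset.mem_Ico.1 (hσs hc); omega
        have hju : ∀ j ≤ n, swapOn {n + 1}
            (swapOn σ w w') (swapOn σ w' w) j = swapOn σ w w' j := fun j hj =>
          swapOn_notMem (by simp; omega) _ _
        have hju' : ∀ j ≤ n, swapOn {n + 1}
            (swapOn σ w' w) (swapOn σ w w') j = swapOn σ w' w j := fun j hj =>
          swapOn_notMem (by simp; omega) _ _
        have hXs : Xf q n (swapOn {n+1} (swapOn σ w w') (swapOn σ w' w))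
            (swapOn {n+1} (swapOn σ w' w) (swapOn σ w w')) =
            Xf q n (swapOn σ w w') (swapOn σ w' w) :=
          Xf_congr q n hn _ _ _ _ hju hju'
        have hYs : Yf q n (swapOn {n+1} (swapOn σ w w') (swapOn σ w' w))
            (swapOn {n+1} (swapOn σ w' w) (swapOn σ w w')) =
            Yf q n (swapOn σ w w') (swapOn σ w' w) :=
          Yf_congr q n hn _ _ _ _ hju hju'
        have A1 : swapOn {n+1} (swapOn σ w w') (swapOn σ w' w) (n+1) =
            swapOn σ w' w (n+1) := by simp [swapOn]
        have A2 : swapOn {n+1} (swapOn σ w' w) (swapOn σ w w') (n+1) =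
            swapOn σ w w' (n+1) := by simp [swapOn]
        have A3 : swapOn {n+1} (swapOn σ w w') (swapOn σ w' w) n =
            swapOn σ w w' n := hju n le_rfl
        have A4 : swapOn {n+1} (swapOn σ w' w) (swapOn σ w w') n =
            swapOn σ w' w n := hju' n le_rfl
        have e5 : swapOn σ w w' (n+1) = w (n+1) := swapOn_notMem hnσ _ _
        have e6 : swapOn σ w' w (n+1) = w' (n+1) := swapOn_notMem hnσ _ _
        simp only [Xf_step q n hn, Yf_step q n hn, chainF, hXs, hYs, A1, A2, A3, A4, e5, e6]
        linear_combination
          (Xf q n (swapOn σ w w') (swapOn σ w' w)) *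
            stepA q x y r m (w (n+1)) (w' (n+1)) (swapOn σ w w' n) (swapOn σ w' w n) +
          (Yf q n (swapOn σ w w') (swapOn σ w' w)) *
            stepB q x y r m (w (n+1)) (w' (n+1)) (swapOn σ w w' n) (swapOn σ w' w n)

lemma topLemma (q : ℂ) (w w' : ℕ → ℂ) :
    ∀ ν, 1 ≤ ν → ∀ T : ℂ,
      Phi q w w' (Finset.Ico 1 (ν + 1)) (fun u u' =>
        Xf q ν u u' * (q * T - u ν) + Yf q ν u u' * (T - q * u' ν)) = 0 := by
  intro ν hν T
  rcases Nat.eq_zero_or_pos (ν - 1) with hn | hn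
  · have hν1 : ν = 1 := by omega
    subst hν1
    have h1 : Finset.Ico 1 2 = insert 1 (∅ : Finset ℕ) := rfl
    rw [h1, Phi_insert q w w' (Finset.notMem_empty 1), Phi_empty]
    have s1 : swapOn {1} w w' 1 = w' 1 := by simp [swapOn]
    have s2 : swapOn {1} w' w 1 = w 1 := by simp [swapOn]
    have s3 : swapOn {1} w w' 0 = w 0 := by simp [swapOn]
    have s4 : swapOn {1} w' w 0 = w' 0 := by simp [swapOn]
    have s5 : swapOn {1} w w' 2 = w 2 := by simp [swapOn]
    have s6 : swapOn {1} w' w 2 = w' 2 := by simp [swapOn]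
    simp only [zero_add, Xf, Yf, chainF, Finset.prod_range_one, Finset.Ico_self,
      Finset.prod_empty, s1, s2, s3, s4, s5, s6]
    linear_combination baseId_lin q (w 0) (w' 0) (w 1) (w' 1) T
  · obtain ⟨n, rfl⟩ : ∃ n, ν = n + 1 := ⟨ν - 1, by omega⟩
    have hn' : 1 ≤ n := by omega
    have hmem : n + 1 ∉ Finset.Ico 1 (n + 1) := by simp
    have hIco : Finset.Ico 1 (n + 1 + 1) = insert (n + 1) (Finset.Ico 1 (n + 1)) := by
      rw [Nat.Ico_succ_right_eq_insert_Ico (by omega)]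
    rw [hIco, Phi_insert q w w' hmem]
    rw [Phi_congr q w w' _ _ (fun u u' =>
      Xf q n u u' * famA q (w (n+1)) (w' (n+1)) T 1 (u n) (u' n) +
      Yf q n u u' * famB q (w (n+1)) (w' (n+1)) T 1 (u n) (u' n)) ?_]
    · exact mainLemma q w w' n hn' _ _ _ _
    · intro σ hσ
      have hσs : σ ⊆ Finset.Ico 1 (n + 1) := Finset.mem_powerset.1 hσ
      have hnσ : (n + 1) ∉ σ := fun hc => by
        have := Finset.mem_Ico.1 (hσs hc); omega
      have hju : ∀ j ≤ n, swapOn {n + 1}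
          (swapOn σ w w') (swapOn σ w' w) j = swapOn σ w w' j := fun j hj =>
        swapOn_notMem (by simp; omega) _ _
      have hju' : ∀ j ≤ n, swapOn {n + 1}
          (swapOn σ w' w) (swapOn σ w w') j = swapOn σ w' w j := fun j hj =>
        swapOn_notMem (by simp; omega) _ _
      have hXs : Xf q n (swapOn {n+1} (swapOn σ w w') (swapOn σ w' w))
          (swapOn {n+1} (swapOn σ w' w) (swapOn σ w w')) =
          Xf q n (swapOn σ w w') (swapOn σ w' w) :=
        Xf_congr q n hn' _ _ _ _ hju hju'
      have hYs : Yf q n (swapOn {n+1} (swapOn σ w w') (swapOn σ w' w))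
          (swapOn {n+1} (swapOn σ w' w) (swapOn σ w w')) =
          Yf q n (swapOn σ w w') (swapOn σ w' w) :=
        Yf_congr q n hn' _ _ _ _ hju hju'
      have A1 : swapOn {n+1} (swapOn σ w w') (swapOn σ w' w) (n+1) =
          swapOn σ w' w (n+1) := by simp [swapOn]
      have A2 : swapOn {n+1} (swapOn σ w' w) (swapOn σ w w') (n+1) =
          swapOn σ w w' (n+1) := by simp [swapOn]
      have A3 : swapOn {n+1} (swapOn σ w w') (swapOn σ w' w) n =
          swapOn σ w w' n := hju n le_rfl
      have A4 : swapOn {n+1} (swapOn σ w' w) (swapOn σ w w') n =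
          swapOn σ w' w n := hju' n le_rfl
      have e5 : swapOn σ w w' (n+1) = w (n+1) := swapOn_notMem hnσ _ _
      have e6 : swapOn σ w' w (n+1) = w' (n+1) := swapOn_notMem hnσ _ _
      simp only [Xf_step q n hn', Yf_step q n hn', chainF, hXs, hYs, A1, A2, A3, A4, e5, e6]
      linear_combination
        (Xf q n (swapOn σ w w') (swapOn σ w' w)) *
          stepA_lin q T (w (n+1)) (w' (n+1)) (swapOn σ w w' n) (swapOn σ w' w n) +
        (Yf q n (swapOn σ w w') (swapOn σ w' w)) *
          stepB_lin q T (w (n+1)) (w' (n+1)) (swapOn σ w w' n) (swapOn σ w' w n)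

lemma Geval (q : ℂ) (w w' : ℕ → ℂ) (hw0 : w 0 ≠ 0) (hw0' : q ^ 2 * w 0 ≠ w' 0) (ν : ℕ)
    (u u' : ℕ → ℂ) (h0 : u 0 = w 0) (h0' : u' 0 = w' 0) :
    ((∏ j ∈ Finset.range ν, (u (j + 1) - q * u' j) * (q * u' (j + 1) - u j)) *
        (q * u' (ν + 1) - u ν) +
      -(bbar q (u' 0 / u 0)) * ((u 1 - q * u 0) * (q * u' 1 - u' 0)) *
        (∏ j ∈ Finset.Ico 1 ν, (u (j + 1) - q * u' j) * (q * u' (j + 1) - u j)) *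
        (u' (ν + 1) - q * u' ν) +
      -(cbar q (u' 0 / u 0)) * ((u 1 - q * u 0) * (q * u' 1 - u' 0)) *
        (∏ j ∈ Finset.Ico 1 ν, (u (j + 1) - q * u' j) * (q * u' (j + 1) - u j)) *
        (q * u' (ν + 1) - u ν)) * (q ^ 2 * w 0 - w' 0) =
    Xf q ν u u' * (q * u' (ν + 1) - u ν) + Yf q ν u u' * (u' (ν + 1) - q * u' ν) := by
  have hD0 : q ^ 2 * w 0 - w' 0 ≠ 0 := sub_ne_zero.2 hw0'
  unfold Xf Yf bbar cbar
  simp only [chainF]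
  rw [h0, h0']
  have hz : q ^ 2 - w' 0 / w 0 ≠ 0 := by
    intro hc
    apply hD0
    have h2 : (q ^ 2 - w' 0 / w 0) * w 0 = 0 := by rw [hc]; ring
    rw [sub_mul, div_mul_cancel₀ _ hw0] at h2
    exact h2
  field_simp
  ring

end Prop7

/-- Proposition 7: `A_μ + B_μ + C_μ ∼ 0` with respect to the fermionic pairs
`(w₁, w₁'), …, (w_{μ−1}, w_{μ−1}')`; for `μ = 1` this is the plain identity
`A₁ + B₁ + C₁ = 0`. -/
theorem proposition7 (N : ℕ) (hN : 2 ≤ N) (μ : ℕ) (hμ1 : 1 ≤ μ) (hμ2 : μ ≤ N - 1)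
    (q : ℂ) (hq : q ≠ 0) (hq2 : q ^ 2 ≠ 1) (w w' : ℕ → ℂ)
    (hw0 : w 0 ≠ 0) (hw0' : q ^ 2 * w 0 ≠ w' 0)
    (hden : ∀ j ∈ Finset.Ico 1 μ, q ^ 2 * w j ≠ w' j) :
    WeakEq (Finset.Ico 1 μ) (fun _ => Hf q) w w'
      (fun u u' =>
        if μ = 1 then
          (q * u' 1 - u 0) + (-(bbar q (u' 0 / u 0)) * (u' 1 - q * u 0)) +
            (-(cbar q (u' 0 / u 0)) * (q * u' 1 - u' 0))
        else
          (∏ j ∈ Finset.range (μ - 1), (u (j + 1) - q * u' j) * (q * u' (j + 1) - u j)) *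
              (q * u' μ - u (μ - 1)) +
            (-(bbar q (u' 0 / u 0)) * ((u 1 - q * u 0) * (q * u' 1 - u' 0)) *
              (∏ j ∈ Finset.Ico 1 (μ - 1),
                (u (j + 1) - q * u' j) * (q * u' (j + 1) - u j)) *
              (u' μ - q * u' (μ - 1))) +
            (-(cbar q (u' 0 / u 0)) * ((u 1 - q * u 0) * (q * u' 1 - u' 0)) *
              (∏ j ∈ Finset.Ico 1 (μ - 1),
                (u (j + 1) - q * u' j) * (q * u' (j + 1) - u j)) *
              (q * u' μ - u (μ - 1))))
      (fun _ _ => 0) := by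
  classical
  by_cases hμ : μ = 1
  · subst hμ
    unfold WeakEq
    simp only [Finset.Ico_self, Finset.powerset_empty, Finset.sum_singleton,
      Finset.prod_empty, one_mul, Prop7.swapOn_empty, if_pos rfl, ↓reduceIte, mul_zero]
    have hD0 : q ^ 2 * w 0 - w' 0 ≠ 0 := sub_ne_zero.2 hw0'
    have hz : q ^ 2 - w' 0 / w 0 ≠ 0 := by
      intro hc
      apply hD0
      have h2 : (q ^ 2 - w' 0 / w 0) * w 0 = 0 := by rw [hc]; ring
      rw [sub_mul, div_mul_cancel₀ _ hw0] at h2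
      exact h2
    unfold bbar cbar
    field_simp
    ring
  · obtain ⟨ν, rfl⟩ : ∃ ν, μ = ν + 1 := ⟨μ - 1, by omega⟩
    have hν : 1 ≤ ν := by omega
    have hD0 : q ^ 2 * w 0 - w' 0 ≠ 0 := sub_ne_zero.2 hw0'
    have hDj : ∀ j ∈ Finset.Ico 1 (ν + 1), q ^ 2 * w j - w' j ≠ 0 :=
      fun j hj => sub_ne_zero.2 (hden j hj)
    have hDprod : (∏ j ∈ Finset.Ico 1 (ν + 1), (q ^ 2 * w j - w' j)) ≠ 0 :=
      Finset.prod_ne_zero_iff.2 hDj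
    unfold WeakEq
    simp only [if_neg hμ, Nat.add_sub_cancel, mul_zero, Finset.sum_const_zero]
    refine (mul_eq_zero.1 ?_).resolve_right (mul_ne_zero hD0 hDprod)
    rw [Finset.sum_mul]
    have hterm : ∀ σ ∈ (Finset.Ico 1 (ν + 1)).powerset,
        ((∏ j ∈ σ, Hf q (w' j) (w j)) *
          ((∏ j ∈ Finset.range ν,
              (swapOn σ w w' (j + 1) - q * swapOn σ w' w j) *
                (q * swapOn σ w' w (j + 1) - swapOn σ w w' j)) *
            (q * swapOn σ w' w (ν + 1) - swapOn σ w w' ν) +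
          -(bbar q (swapOn σ w' w 0 / swapOn σ w w' 0)) *
              ((swapOn σ w w' 1 - q * swapOn σ w w' 0) *
                (q * swapOn σ w' w 1 - swapOn σ w' w 0)) *
              (∏ j ∈ Finset.Ico 1 ν,
                (swapOn σ w w' (j + 1) - q * swapOn σ w' w j) *
                  (q * swapOn σ w' w (j + 1) - swapOn σ w w' j)) *
              (swapOn σ w' w (ν + 1) - q * swapOn σ w' w ν) +
          -(cbar q (swapOn σ w' w 0 / swapOn σ w w' 0)) *
              ((swapOn σ w w' 1 - q * swapOn σ w w' 0) *
                (q * swapOn σ w' w 1 - swapOn σ w' w 0)) *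
              (∏ j ∈ Finset.Ico 1 ν,
                (swapOn σ w w' (j + 1) - q * swapOn σ w' w j) *
                  (q * swapOn σ w' w (j + 1) - swapOn σ w w' j)) *
              (q * swapOn σ w' w (ν + 1) - swapOn σ w w' ν))) *
          ((q ^ 2 * w 0 - w' 0) * ∏ j ∈ Finset.Ico 1 (ν + 1), (q ^ 2 * w j - w' j)) =
        ((∏ j ∈ σ, -(q ^ 2 * w' j - w j)) *
            ∏ j ∈ Finset.Ico 1 (ν + 1) \ σ, (q ^ 2 * w j - w' j)) *
          (Prop7.Xf q ν (swapOn σ w w') (swapOn σ w' w) *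
              (q * w' (ν + 1) - swapOn σ w w' ν) +
            Prop7.Yf q ν (swapOn σ w w') (swapOn σ w' w) *
              (w' (ν + 1) - q * swapOn σ w' w ν)) := by
      intro σ hσ
      have hσJ : σ ⊆ Finset.Ico 1 (ν + 1) := Finset.mem_powerset.1 hσ
      have h0m : (0 : ℕ) ∉ σ := fun hc => by
        have := Finset.mem_Ico.1 (hσJ hc); omega
      have hνm : (ν + 1) ∉ σ := fun hc => by
        have := Finset.mem_Ico.1 (hσJ hc); omega
      have h0 : swapOn σ w w' 0 = w 0 := Prop7.swapOn_notMem h0m w w'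
      have h0' : swapOn σ w' w 0 = w' 0 := Prop7.swapOn_notMem h0m w' w
      have hν1 : swapOn σ w' w (ν + 1) = w' (ν + 1) := Prop7.swapOn_notMem hνm w' w
      have hprod : (∏ j ∈ σ, Hf q (w' j) (w j)) *
          (∏ j ∈ Finset.Ico 1 (ν + 1), (q ^ 2 * w j - w' j)) =
          (∏ j ∈ σ, -(q ^ 2 * w' j - w j)) *
            ∏ j ∈ Finset.Ico 1 (ν + 1) \ σ, (q ^ 2 * w j - w' j) := by
        rw [← Finset.prod_sdiff hσJ, ← mul_assoc]
        nth_rewrite 2 [mul_comm]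
        rw [mul_assoc, ← Finset.prod_mul_distrib]
        nth_rewrite 2 [mul_comm]
        congr 1
        refine Finset.prod_congr rfl fun j hj => ?_
        unfold Hf
        rw [div_mul_cancel₀ _ (hDj j (hσJ hj))]
      have hG := Prop7.Geval q w w' hw0 hw0' ν (swapOn σ w w') (swapOn σ w' w) h0 h0'
      rw [mul_comm (q ^ 2 * w 0 - w' 0), mul_mul_mul_comm, hprod, hG, hν1]
    rw [Finset.sum_congr rfl hterm]
    have := Prop7.topLemma q w w' ν hν (w' (ν + 1))
    unfold Prop7.Phi at this
    exact this
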